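/- Let G be a graph, let k ≥ 1, and let t = k+1. If G contains a path on n vertices, then the sheared complete blow-up G^k{k+1} contains a copy of the k-th power of the path P_n^k. Here G^k{k+1} is any graph obtained from the complete blow-up G^k(k+1) by removing a perfect matching between the (k+1)-cliques C(u) and C(v) for every edge uv of G^k. -/

import Mathlib

/-- The `k`-th power of a graph: distinct vertices are adjacent iff they are joined
by a walk of length at most `k`. -/
def powGraph {V : Type*} (G : SimpleGraph V) (k : ℕ) : SimpleGraph V where
  Adj u v := u ≠ v ∧ ∃ w : G.Walk u v, w.length ≤ k
  symm := by
    refine ⟨?_⟩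
    rintro u v ⟨h, w, hw⟩
    exact ⟨h.symm, w.reverse, by simpa using hw⟩
  loopless := by refine ⟨?_⟩; rintro u ⟨h, -⟩; exact h rfl

/-- A sheared complete blow-up `G{t}`: each vertex is replaced by a `t`-clique and
each edge `uv` of `G` by a complete bipartite graph minus the perfect matching
determined by the bijection `σ u v`. -/
def shearedBlowup {V : Type*} (G : SimpleGraph V) (t : ℕ)
    (σ : V → V → Equiv (Fin t) (Fin t)) (hσ : ∀ u v, σ v u = (σ u v).symm) :
    SimpleGraph (V × Fin t) where
  Adj x y := (x.1 = y.1 ∧ x.2 ≠ y.2) ∨ (G.Adj x.1 y.1 ∧ σ x.1 y.1 x.2 ≠ y.2)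
  symm := by
    refine ⟨?_⟩
    rintro ⟨u, i⟩ ⟨v, j⟩ (⟨h1, h2⟩ | ⟨h1, h2⟩)
    · exact Or.inl ⟨h1.symm, h2.symm⟩
    · refine Or.inr ⟨h1.symm, ?_⟩
      rw [hσ]
      intro hc
      exact h2 (by rw [← hc]; simp)
  loopless := by
    refine ⟨?_⟩
    rintro ⟨u, i⟩ (⟨-, h⟩ | ⟨h, -⟩)
    · exact h rfl
    · exact G.irrefl h


/-- choose an element of `Fin (k+1)` avoiding a finset. -/
noncomputable def chooseAvoid {k : ℕ} (S : Finset (Fin (k + 1))) : Fin (k + 1) :=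
  if h : Sᶜ.Nonempty then h.choose else 0

lemma chooseAvoid_not_mem {k : ℕ} {S : Finset (Fin (k + 1))} (h : S.card ≤ k) :
    chooseAvoid S ∉ S := by
  have hne : Sᶜ.Nonempty := by
    rw [← Finset.card_pos, Finset.card_compl, Fintype.card_fin]
    omega
  have := hne.choose_spec
  rw [Finset.mem_compl] at this
  simpa [chooseAvoid, hne] using this

/-- greedy colouring -/
noncomputable def col {V : Type*} (k : ℕ) (σ : V → V → Equiv (Fin (k + 1)) (Fin (k + 1)))
    (u : ℕ → V) : ℕ → Fin (k + 1) := fun j =>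
  chooseAvoid ((Finset.Ico (j - k) j).attach.image
    (fun i => σ (u i.1) (u j) (col k σ u i.1)))
termination_by j => j
decreasing_by exact (Finset.mem_Ico.mp i.2).2

lemma col_spec {V : Type*} (k : ℕ) (σ : V → V → Equiv (Fin (k + 1)) (Fin (k + 1)))
    (u : ℕ → V) {i j : ℕ} (hij : i < j) (hk : j - i ≤ k) :
    σ (u i) (u j) (col k σ u i) ≠ col k σ u j := by
  have hmem : i ∈ Finset.Ico (j - k) j := Finset.mem_Ico.mpr ⟨by omega, hij⟩
  have hcard : ((Finset.Ico (j - k) j).attach.image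
      (fun i => σ (u i.1) (u j) (col k σ u i.1))).card ≤ k := by
    refine le_trans (Finset.card_image_le) ?_
    rw [Finset.card_attach, Nat.card_Ico]
    omega
  have h := chooseAvoid_not_mem hcard
  have hmem2 : σ (u i) (u j) (col k σ u i) ∈ (Finset.Ico (j - k) j).attach.image
      (fun i => σ (u i.1) (u j) (col k σ u i.1)) :=
    Finset.mem_image.mpr ⟨⟨i, hmem⟩, Finset.mem_attach _ _, rfl⟩
  have hcol : col k σ u j = chooseAvoid ((Finset.Ico (j - k) j).attach.image
      (fun i => σ (u i.1) (u j) (col k σ u i.1))) := by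
    conv_lhs => rw [col]
  intro hc
  exact h (by rw [← hcol, ← hc]; exact hmem2)

lemma path_walk_bound {n : ℕ} {i j : Fin n} (w : (SimpleGraph.pathGraph n).Walk i j) :
    (j.val ≤ i.val + w.length) ∧ (i.val ≤ j.val + w.length) := by
  induction w with
  | nil => simp
  | cons h w ih =>
    rw [SimpleGraph.pathGraph_adj] at h
    simp only [SimpleGraph.Walk.length_cons]
    omega

/-- If `G` contains a path on `n` vertices, then any sheared complete
blow-up `G^k{k+1}` contains a copy of `P_n^k`. -/
theorem stmt4 {V : Type*} (G : SimpleGraph V) (k n : ℕ) (hk : 1 ≤ k)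
    (σ : V → V → Equiv (Fin (k + 1)) (Fin (k + 1)))
    (hσ : ∀ u v, σ v u = (σ u v).symm)
    (hpath : ∃ f : SimpleGraph.pathGraph n →g G, Function.Injective f) :
    ∃ g : powGraph (SimpleGraph.pathGraph n) k →g
        shearedBlowup (powGraph G k) (k + 1) σ hσ, Function.Injective g := by
  obtain ⟨f, hf⟩ := hpath
  rcases Nat.eq_zero_or_pos n with hn | hn
  · subst hn
    exact ⟨⟨Fin.elim0, fun {a} => a.elim0⟩, fun a => a.elim0⟩
  set u : ℕ → V := fun j => if h : j < n then f ⟨j, h⟩ else f ⟨0, hn⟩ with hu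
  have hu' : ∀ i : Fin n, u i.val = f i := by
    intro i; simp [hu, i.isLt]
  have key : ∀ i j : Fin n, i.val < j.val → j.val - i.val ≤ k →
      σ (f i) (f j) (col k σ u i.val) ≠ col k σ u j.val := by
    intro i j h1 h2
    have := col_spec k σ u h1 h2
    rwa [hu' i, hu' j] at this
  refine ⟨⟨fun i => (f i, col k σ u i.val), ?_⟩, ?_⟩
  · intro i j hij
    obtain ⟨hne, w, hw⟩ := hij
    have hb := path_walk_bound w
    refine Or.inr ⟨⟨fun hc => hne (hf hc), w.map f, by simpa using hw⟩, ?_⟩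
    have hvne : i.val ≠ j.val := fun hc => hne (Fin.ext hc)
    rcases hvne.lt_or_gt with h1 | h1
    · exact key i j h1 (by omega)
    · have h2 := key j i h1 (by omega)
      rw [hσ]
      intro hc
      exact h2 ((Equiv.symm_apply_eq _).mp hc).symm
  · intro a b hab
    exact hf (congrArg Prod.fst hab)
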